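/- Let r ≥ 2 and 1 < λ ≤ ν be natural numbers, and let X, Y be bullseye spaces with x(n) = x₀ r^{νn}, y(n) = y₀ r^{λn} for all n ≥ n₀. Then there exists a (1, λ/ν)-isomorphism β : X → Y, and for any α > λ/ν there is no surjective α-morphism from Y to X. -/

import Mathlib

/-- `β` is an `α`-morphism of bullseye spaces: it fixes the distinguished point
`∗` (= `none`), and there is `k ∈ ℝ` such that whenever a point of the ring `X_N`
is sent to a point of the ring `Y_M`, one has `M ≥ αN + k`. -/
def IsAlphaMorphism (X Y : ℕ → Type*) (α : ℝ)
    (β : Option (Σ n, X n) → Option (Σ n, Y n)) : Prop :=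
  β none = none ∧ ∃ k : ℝ, ∀ (N : ℕ) (x : X N) (M : ℕ) (y : Y M),
    β (some ⟨N, x⟩) = some ⟨M, y⟩ → α * N + k ≤ M


open Finset

section Graded

variable (Z : ℕ → Type*) [∀ n, Fintype (Z n)]

/-- cumulative ring sizes -/
def bSum (N : ℕ) : ℕ := ∑ n ∈ Finset.range N, Fintype.card (Z n)

/-- graded index of a point -/
noncomputable def toIdx (p : Σ n, Z n) : ℕ := bSum Z p.1 + (Fintype.equivFin (Z p.1) p.2 : ℕ)

lemma bSum_mono : Monotone (bSum Z) := fun _ _ h =>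
  Finset.sum_le_sum_of_subset (Finset.range_subset_range.2 h)

lemma bSum_succ (N : ℕ) : bSum Z (N + 1) = bSum Z N + Fintype.card (Z N) :=
  Finset.sum_range_succ _ _

lemma le_toIdx (p : Σ n, Z n) : bSum Z p.1 ≤ toIdx Z p := Nat.le_add_right _ _

lemma toIdx_lt (p : Σ n, Z n) : toIdx Z p < bSum Z (p.1 + 1) := by
  have h := (Fintype.equivFin (Z p.1) p.2).2
  rw [bSum_succ]; unfold toIdx; omega

lemma toIdx_injective : Function.Injective (toIdx Z) := by
  rintro ⟨n, x⟩ ⟨m, y⟩ h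
  have hnm : n = m := by
    by_contra hne
    rcases Nat.lt_or_ge n m with h1 | h1
    · have h2 := toIdx_lt Z ⟨n, x⟩
      have h3 := bSum_mono Z (Nat.succ_le_of_lt h1)
      have h4 := le_toIdx Z ⟨m, y⟩
      simp only [Nat.succ_eq_add_one] at h2 h3 h4
      omega
    · rcases Nat.lt_or_ge m n with h1' | h1'
      · have h2 := toIdx_lt Z ⟨m, y⟩
        have h3 := bSum_mono Z (Nat.succ_le_of_lt h1')
        have h4 := le_toIdx Z ⟨n, x⟩
        simp only [Nat.succ_eq_add_one] at h2 h3 h4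
        omega
      · omega
  subst hnm
  simp only [toIdx] at h
  have h5 : Fintype.equivFin (Z n) x = Fintype.equivFin (Z n) y :=
    Fin.ext (Nat.add_left_cancel h)
  exact congrArg (fun z => (⟨n, z⟩ : Σ n, Z n)) ((Fintype.equivFin (Z n)).injective h5)

lemma toIdx_surjective (hZ : ∀ t, ∃ n, t < bSum Z (n + 1)) :
    Function.Surjective (toIdx Z) := by
  intro t
  obtain ⟨n, hlt, hmin⟩ : ∃ n, t < bSum Z (n + 1) ∧ bSum Z n ≤ t := by
    refine ⟨Nat.find (hZ t), Nat.find_spec (hZ t), ?_⟩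
    rcases Nat.eq_zero_or_pos (Nat.find (hZ t)) with h | h
    · rw [h]; simp [bSum]
    · have hmlt : Nat.find (hZ t) - 1 < Nat.find (hZ t) := by omega
      have h2 := Nat.find_min (hZ t) hmlt
      have h3 : Nat.find (hZ t) - 1 + 1 = Nat.find (hZ t) := by omega
      rw [h3] at h2
      omega
  have hcard : t - bSum Z n < Fintype.card (Z n) := by
    rw [bSum_succ] at hlt; omega
  refine ⟨⟨n, (Fintype.equivFin (Z n)).symm ⟨t - bSum Z n, hcard⟩⟩, ?_⟩
  simp only [toIdx, Equiv.apply_symm_apply]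
  omega

end Graded

lemma geomSumLe (q : ℕ) (hq : 2 ≤ q) (N : ℕ) : ∑ n ∈ Finset.range N, q ^ n ≤ q ^ N := by
  induction N with
  | zero => simp
  | succ N ih =>
    rw [Finset.sum_range_succ, pow_succ]
    nlinarith [pow_pos (by omega : 0 < q) N]

lemma bSum_upper (Z : ℕ → Type*) [∀ n, Fintype (Z n)] (n₀ z₀ r v : ℕ)
    (hr : 2 ≤ r) (hv : 1 ≤ v)
    (hz : ∀ n ≥ n₀, Fintype.card (Z n) = z₀ * r ^ (v * n)) (N : ℕ) :
    bSum Z (N + 1) ≤ r ^ (v * N + (v + bSum Z n₀ + z₀)) := by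
  have hq : 2 ≤ r ^ v := by
    calc 2 ≤ r := hr
    _ = r ^ 1 := (pow_one r).symm
    _ ≤ r ^ v := Nat.pow_le_pow_right (by omega) hv
  have step1 : bSum Z (N + 1) ≤ bSum Z n₀ + z₀ * (r ^ v) ^ (N + 1) := by
    rcases le_or_gt (N + 1) n₀ with hc | hc
    · exact le_add_right (bSum_mono Z hc)
    · have hsplit : bSum Z (N + 1) = bSum Z n₀ + ∑ n ∈ Finset.Ico n₀ (N + 1), Fintype.card (Z n) := by
        unfold bSum
        rw [Finset.range_eq_Ico, Finset.range_eq_Ico]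
        exact (Finset.sum_Ico_consecutive (fun n => Fintype.card (Z n)) (Nat.zero_le n₀) hc.le).symm
      rw [hsplit]
      refine Nat.add_le_add_left ?_ _
      calc ∑ n ∈ Finset.Ico n₀ (N + 1), Fintype.card (Z n)
          = ∑ n ∈ Finset.Ico n₀ (N + 1), z₀ * (r ^ v) ^ n := by
            refine Finset.sum_congr rfl fun n hn => ?_
            rw [hz n (Finset.mem_Ico.mp hn).1, ← pow_mul]
        _ ≤ ∑ n ∈ Finset.range (N + 1), z₀ * (r ^ v) ^ n := by
            refine Finset.sum_le_sum_of_subset ?_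
            intro a ha
            rw [Finset.mem_range]
            exact (Finset.mem_Ico.mp ha).2
        _ = z₀ * ∑ n ∈ Finset.range (N + 1), (r ^ v) ^ n := (Finset.mul_sum _ _ _).symm
        _ ≤ z₀ * (r ^ v) ^ (N + 1) := Nat.mul_le_mul_left _ (geomSumLe _ hq _)
  have step2 : bSum Z n₀ + z₀ * (r ^ v) ^ (N + 1) ≤ (bSum Z n₀ + z₀) * (r ^ v) ^ (N + 1) := by
    have h1 : 1 ≤ (r ^ v) ^ (N + 1) := Nat.one_le_pow _ _ (by omega)
    nlinarith [Nat.zero_le (bSum Z n₀), Nat.zero_le z₀]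
  have step3 : bSum Z n₀ + z₀ ≤ r ^ (bSum Z n₀ + z₀) := by
    calc bSum Z n₀ + z₀ ≤ 2 ^ (bSum Z n₀ + z₀) := Nat.le_of_lt Nat.lt_two_pow_self
    _ ≤ r ^ (bSum Z n₀ + z₀) := Nat.pow_le_pow_left hr _
  calc bSum Z (N + 1) ≤ (bSum Z n₀ + z₀) * (r ^ v) ^ (N + 1) := step1.trans step2
    _ ≤ r ^ (bSum Z n₀ + z₀) * (r ^ v) ^ (N + 1) := Nat.mul_le_mul_right _ step3
    _ = r ^ (v * N + (v + bSum Z n₀ + z₀)) := by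
        rw [← pow_mul, ← pow_add]
        ring_nf

lemma bSum_lower (Z : ℕ → Type*) [∀ n, Fintype (Z n)] (n₀ z₀ r v : ℕ)
    (hz₀ : 0 < z₀)
    (hz : ∀ n ≥ n₀, Fintype.card (Z n) = z₀ * r ^ (v * n)) (N : ℕ) (hN : n₀ ≤ N) :
    r ^ (v * N) ≤ bSum Z (N + 1) := by
  calc r ^ (v * N) ≤ z₀ * r ^ (v * N) := Nat.le_mul_of_pos_left _ hz₀
    _ = Fintype.card (Z N) := (hz N hN).symm
    _ ≤ bSum Z (N + 1) := by
        unfold bSum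
        exact Finset.single_le_sum (f := fun n => Fintype.card (Z n))
          (fun i _ => Nat.zero_le _) (Finset.self_mem_range_succ N)

lemma bSum_unbounded (Z : ℕ → Type*) [∀ n, Fintype (Z n)] (n₀ z₀ r v : ℕ)
    (hz₀ : 0 < z₀) (hr : 2 ≤ r) (hv : 1 ≤ v)
    (hz : ∀ n ≥ n₀, Fintype.card (Z n) = z₀ * r ^ (v * n)) :
    ∀ t, ∃ n, t < bSum Z (n + 1) := by
  intro t
  refine ⟨max n₀ t, ?_⟩
  have h1 : t ≤ max n₀ t := le_max_right _ _
  have h2 : max n₀ t < 2 ^ (max n₀ t) := Nat.lt_two_pow_self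
  calc t < 2 ^ (max n₀ t) := by omega
    _ ≤ 2 ^ (v * max n₀ t) := Nat.pow_le_pow_right (by omega) (Nat.le_mul_of_pos_left _ (by omega))
    _ ≤ r ^ (v * max n₀ t) := Nat.pow_le_pow_left hr _
    _ ≤ bSum Z (max n₀ t + 1) := bSum_lower Z n₀ z₀ r v hz₀ hz _ (le_max_left _ _)

/-- let `r ≥ 2`, `1 < λ ≤ ν`, and suppose `x(n) = x₀ r^{νn}` and
`y(n) = y₀ r^{λn}` for all `n ≥ n₀`.  Then there is a bijective
`(1, λ/ν)`-isomorphism `β : X → Y` (i.e. `β` is a `1`-morphism and `β⁻¹` a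
`λ/ν`-morphism), and for any `α > λ/ν` there is no surjective `α`-morphism from
`Y` to `X`. -/
theorem stmt15 (X Y : ℕ → Type*) [∀ n, Fintype (X n)] [∀ n, Fintype (Y n)]
    (n₀ x₀ y₀ r lam nu : ℕ) (hn₀ : 0 < n₀) (hx₀ : 0 < x₀) (hy₀ : 0 < y₀)
    (hr : 2 ≤ r) (hlam : 1 < lam) (hlamnu : lam ≤ nu)
    (hx : ∀ n ≥ n₀, Fintype.card (X n) = x₀ * r ^ (nu * n))
    (hy : ∀ n ≥ n₀, Fintype.card (Y n) = y₀ * r ^ (lam * n)) :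
    (∃ β : Option (Σ n, X n) → Option (Σ n, Y n),
      Function.Bijective β ∧ IsAlphaMorphism X Y (1 : ℝ) β ∧
      ∃ k : ℝ, ∀ (N : ℕ) (x : X N) (M : ℕ) (y : Y M),
        β (some ⟨N, x⟩) = some ⟨M, y⟩ → ((lam : ℝ) / nu) * M + k ≤ N) ∧
    ∀ α : ℝ, (lam : ℝ) / nu < α →
      ¬ ∃ β : Option (Σ n, Y n) → Option (Σ n, X n),
          Function.Surjective β ∧ IsAlphaMorphism Y X α β := by
  have hr1 : 1 < r := by omega
  have hnu1 : 1 ≤ nu := by omega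
  have hlam1 : 1 ≤ lam := by omega
  have hXub := bSum_unbounded X n₀ x₀ r nu hx₀ hr hnu1 hx
  have hYub := bSum_unbounded Y n₀ y₀ r lam hy₀ hr hlam1 hy
  set cX := nu + bSum X n₀ + x₀ with hcXdef
  set cY := lam + bSum Y n₀ + y₀ with hcYdef
  have hXup : ∀ N, bSum X (N + 1) ≤ r ^ (nu * N + cX) :=
    bSum_upper X n₀ x₀ r nu hr hnu1 hx
  have hYup : ∀ N, bSum Y (N + 1) ≤ r ^ (lam * N + cY) :=
    bSum_upper Y n₀ y₀ r lam hr hlam1 hy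
  have hXlo : ∀ N, n₀ ≤ N → r ^ (nu * N) ≤ bSum X (N + 1) :=
    fun N hN => bSum_lower X n₀ x₀ r nu hx₀ hx N hN
  have hYlo : ∀ N, n₀ ≤ N → r ^ (lam * N) ≤ bSum Y (N + 1) :=
    fun N hN => bSum_lower Y n₀ y₀ r lam hy₀ hy N hN
  have hnupos : (0 : ℝ) < nu := by exact_mod_cast Nat.pos_of_ne_zero (by omega)
  constructor
  · -- Part 1: the (1, lam/nu)-isomorphism
    set eX : (Σ n, X n) ≃ ℕ :=
      Equiv.ofBijective (toIdx X) ⟨toIdx_injective X, toIdx_surjective X hXub⟩ with heX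
    set eY : (Σ n, Y n) ≃ ℕ :=
      Equiv.ofBijective (toIdx Y) ⟨toIdx_injective Y, toIdx_surjective Y hYub⟩ with heY
    refine ⟨Option.map (eX.trans eY.symm), ?_, ?_, ?_⟩
    · exact (Equiv.optionCongr (eX.trans eY.symm)).bijective
    · -- 1-morphism
      refine ⟨rfl, -((n₀ : ℝ) + cY + 1), ?_⟩
      intro N x M y h
      have key : bSum X N < bSum Y (M + 1) := by
        rw [Option.map_some] at h
        have h2 : eY.symm (eX ⟨N, x⟩) = ⟨M, y⟩ := Option.some_injective _ h
        have h3 : toIdx X ⟨N, x⟩ = toIdx Y ⟨M, y⟩ := by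
          have h4 := congrArg eY h2
          rwa [Equiv.apply_symm_apply] at h4
        calc bSum X N ≤ toIdx X ⟨N, x⟩ := le_toIdx X ⟨N, x⟩
          _ = toIdx Y ⟨M, y⟩ := h3
          _ < bSum Y (M + 1) := toIdx_lt Y ⟨M, y⟩
      rcases le_or_gt N n₀ with hN | hN
      · have h5 : (N : ℝ) ≤ n₀ := by exact_mod_cast hN
        have h6 : (0 : ℝ) ≤ M := Nat.cast_nonneg M
        have h7 : (0 : ℝ) ≤ cY := Nat.cast_nonneg cY
        linarith
      · have hNn : n₀ ≤ N - 1 := by omega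
        have e1 : r ^ (nu * (N - 1)) ≤ bSum X N := by
          have := hXlo (N - 1) hNn
          rwa [Nat.sub_add_cancel (by omega)] at this
        have e2 : r ^ (nu * (N - 1)) < r ^ (lam * M + cY) :=
          lt_of_lt_of_le (e1.trans_lt key) (hYup M)
        have e3 : nu * (N - 1) < lam * M + cY := by
          have := (Nat.pow_lt_pow_iff_right hr1).mp e2
          exact this
        have e4 : lam * (N - 1) ≤ nu * (N - 1) := Nat.mul_le_mul_right _ hlamnu
        have e5 : cY ≤ lam * cY := Nat.le_mul_of_pos_left _ (by omega)
        have e6 : lam * (N - 1) ≤ lam * (M + cY) := by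
          calc lam * (N - 1) ≤ lam * M + cY := by omega
            _ ≤ lam * M + lam * cY := by omega
            _ = lam * (M + cY) := (Nat.mul_add _ _ _).symm
        have e7 : N - 1 ≤ M + cY := Nat.le_of_mul_le_mul_left e6 (by omega)
        have e8 : N ≤ M + cY + 1 := by omega
        have e9 : (N : ℝ) ≤ M + cY + 1 := by exact_mod_cast e8
        linarith
    · -- reverse (lam/nu)-morphism condition
      refine ⟨-((n₀ : ℝ) + cX + lam), ?_⟩
      intro N x M y h
      have key : bSum Y M < bSum X (N + 1) := by
        rw [Option.map_some] at h
        have h2 : eY.symm (eX ⟨N, x⟩) = ⟨M, y⟩ := Option.some_injective _ h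
        have h3 : toIdx X ⟨N, x⟩ = toIdx Y ⟨M, y⟩ := by
          have h4 := congrArg eY h2
          rwa [Equiv.apply_symm_apply] at h4
        calc bSum Y M ≤ toIdx Y ⟨M, y⟩ := le_toIdx Y ⟨M, y⟩
          _ = toIdx X ⟨N, x⟩ := h3.symm
          _ < bSum X (N + 1) := toIdx_lt X ⟨N, x⟩
      have hratio : (lam : ℝ) / nu ≤ 1 := by
        rw [div_le_one hnupos]
        exact_mod_cast hlamnu
      rcases le_or_gt M n₀ with hM | hM
      · have h5 : (M : ℝ) ≤ n₀ := by exact_mod_cast hM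
        have h6 : (lam : ℝ) / nu * M ≤ M :=
          mul_le_of_le_one_left (Nat.cast_nonneg M) hratio
        have h7 : (0 : ℝ) ≤ N := Nat.cast_nonneg N
        have h8 : (0 : ℝ) ≤ cX := Nat.cast_nonneg cX
        have h9 : (0 : ℝ) ≤ lam := Nat.cast_nonneg lam
        linarith
      · have hMn : n₀ ≤ M - 1 := by omega
        have e1 : r ^ (lam * (M - 1)) ≤ bSum Y M := by
          have := hYlo (M - 1) hMn
          rwa [Nat.sub_add_cancel (by omega)] at this
        have e2 : r ^ (lam * (M - 1)) < r ^ (nu * N + cX) :=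
          lt_of_lt_of_le (e1.trans_lt key) (hXup N)
        have e3 : lam * (M - 1) < nu * N + cX := (Nat.pow_lt_pow_iff_right hr1).mp e2
        have e4 : lam * M ≤ nu * N + cX + lam := by
          have h5 : lam * ((M - 1) + 1) = lam * (M - 1) + lam := by ring
          have h6 : M - 1 + 1 = M := by omega
          rw [h6] at h5
          omega
        have e5 : (lam : ℝ) * M ≤ nu * N + cX + lam := by exact_mod_cast e4
        have e6 : (lam : ℝ) / nu * M = lam * M / nu := by ring
        have e7 : (lam : ℝ) * M / nu ≤ ((nu : ℝ) * N + cX + lam) / nu := by gcongr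
        have e8 : ((nu : ℝ) * N + cX + lam) / nu = N + ((cX : ℝ) + lam) / nu := by
          field_simp
          ring
        have e9 : ((cX : ℝ) + lam) / nu ≤ (cX : ℝ) + lam :=
          div_le_self (by positivity) (by exact_mod_cast hnu1)
        have h10 : (0 : ℝ) ≤ n₀ := Nat.cast_nonneg n₀
        linarith [e6, e7, e8, e9]
  · -- Part 2: no surjective α-morphism for α > lam/nu
    intro α hα hex
    obtain ⟨β, hsurj, hnone, k, hk⟩ := hex
    have hlampos : (0 : ℝ) < lam := by exact_mod_cast (by omega : 0 < lam)
    have hα0 : 0 < α := lt_trans (div_pos hlampos hnupos) hα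
    have hαν : (lam : ℝ) < α * nu := by
      rw [div_lt_iff₀ hnupos] at hα
      linarith
    obtain ⟨M, hM⟩ :=
      exists_nat_gt (max (max (n₀ : ℝ) k) ((α * cY - lam * k) / (α * nu - lam)))
    have hMn₀ : n₀ ≤ M := by
      have h1 : (n₀ : ℝ) < M :=
        lt_of_le_of_lt ((le_max_left _ _).trans (le_max_left _ _)) hM
      exact_mod_cast h1.le
    have hMk : k ≤ (M : ℝ) :=
      ((le_max_right _ _).trans (le_max_left _ _)).trans hM.le
    have hpre : ∀ xx : X M, ∃ p : Σ n, Y n, β (some p) = some ⟨M, xx⟩ := by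
      intro xx
      obtain ⟨o, ho⟩ := hsurj (some ⟨M, xx⟩)
      cases o with
      | none => rw [hnone] at ho; exact absurd ho (by simp)
      | some p => exact ⟨p, ho⟩
    choose p hp using hpre
    set T : ℕ := ⌊((M : ℝ) - k) / α⌋₊ with hTdef
    have hNT : ∀ xx : X M, (p xx).1 ≤ T := by
      intro xx
      have h1 : α * ((p xx).1 : ℝ) + k ≤ M := hk (p xx).1 (p xx).2 M xx (hp xx)
      refine Nat.le_floor ?_
      rw [le_div_iff₀ hα0]
      linarith
    have hlt : ∀ xx : X M, toIdx Y (p xx) < bSum Y (T + 1) := fun xx =>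
      lt_of_lt_of_le (toIdx_lt Y (p xx)) (bSum_mono Y (Nat.succ_le_succ (hNT xx)))
    have hcard : Fintype.card (X M) ≤ bSum Y (T + 1) := by
      have hi : Function.Injective
          (fun xx : X M => (⟨toIdx Y (p xx), hlt xx⟩ : Fin (bSum Y (T + 1)))) := by
        intro a b hab
        have h1 : toIdx Y (p a) = toIdx Y (p b) := congrArg Fin.val hab
        have h2 : p a = p b := toIdx_injective Y h1
        have h3 : (some (⟨M, a⟩ : Σ n, X n)) = some (⟨M, b⟩ : Σ n, X n) := by
          rw [← hp a, ← hp b, h2]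
        simpa using h3
      simpa using Fintype.card_le_of_injective _ hi
    have e1 : r ^ (nu * M) ≤ bSum Y (T + 1) := by
      calc r ^ (nu * M) ≤ x₀ * r ^ (nu * M) := Nat.le_mul_of_pos_left _ hx₀
        _ = Fintype.card (X M) := (hx M hMn₀).symm
        _ ≤ _ := hcard
    have e2 : nu * M ≤ lam * T + cY :=
      (Nat.pow_le_pow_iff_right hr1).mp (e1.trans (hYup T))
    have e3 : (nu : ℝ) * M ≤ lam * T + cY := by exact_mod_cast e2
    have e4 : (T : ℝ) ≤ ((M : ℝ) - k) / α :=
      Nat.floor_le (div_nonneg (by linarith) hα0.le)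
    have e5 : (lam : ℝ) * T ≤ lam * (((M : ℝ) - k) / α) := by
      exact mul_le_mul_of_nonneg_left e4 hlampos.le
    have e6 : α * ((nu : ℝ) * M) ≤ α * (lam * (((M : ℝ) - k) / α) + cY) :=
      mul_le_mul_of_nonneg_left (by linarith) hα0.le
    have e7 : α * (lam * (((M : ℝ) - k) / α) + cY) = lam * ((M : ℝ) - k) + α * cY := by
      field_simp
    have e8 : (α * nu - lam) * M ≤ α * cY - lam * k := by nlinarith [e6, e7]
    have hB : (α * cY - lam * k) / (α * nu - lam) < M :=
      lt_of_le_of_lt (le_max_right _ _) hM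
    have hpos : (0 : ℝ) < α * nu - lam := by linarith
    have e9 : α * cY - lam * k < (α * nu - lam) * M := by
      calc α * cY - lam * k = (α * cY - lam * k) / (α * nu - lam) * (α * nu - lam) := by
            field_simp
        _ < M * (α * nu - lam) := by
            exact mul_lt_mul_of_pos_right hB hpos
        _ = (α * nu - lam) * M := by ring
    linarith
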